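/- Let d ≥ 1 be an integer, α ∈ (0,1), and b > 0. Let U : (0,∞) → [0,∞) be non-increasing with ρ ↦ ρ^{d-1}·U(ρ) Lebesgue integrable on (0,∞). Then ∫_z^∞ (1-(z/ρ)^{1/b})^{-α} · ρ^{d-1} · U(ρ) dρ tends to ∫_0^∞ ρ^{d-1}·U(ρ) dρ as z → 0⁺. -/

import Mathlib

open MeasureTheory Set Filter Topology

/-- Bernoulli-type inequality: `min s 1 * (1 - x) ≤ 1 - x ^ s` for `x ∈ [0,1]`, `s > 0`. -/
lemma aux_bernoulli_flux {s x : ℝ} (hs : 0 < s) (hx0 : 0 ≤ x) (hx1 : x ≤ 1) :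
    min s 1 * (1 - x) ≤ 1 - x ^ s := by
  rcases le_total s 1 with h | h
  · rw [min_eq_left h]
    have hb := rpow_one_add_le_one_add_mul_self (s := x - 1) (by linarith) hs.le h
    have hx : 1 + (x - 1) = x := by ring
    rw [hx] at hb
    nlinarith
  · rw [min_eq_right h]
    have hxs : x ^ s ≤ x ^ (1 : ℝ) := by
      rcases eq_or_lt_of_le hx0 with h0 | h0
      · rw [← h0, Real.zero_rpow hs.ne', Real.zero_rpow one_ne_zero]
      · exact Real.rpow_le_rpow_of_exponent_ge h0 hx1 h
    rw [Real.rpow_one] at hxs; linarith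

/-- The tail mass near the origin vanishes. -/
lemma aux_Tlimit_flux (g : ℝ → ℝ) (hg : IntegrableOn g (Set.Ioi 0))
    (hg0 : ∀ ρ ∈ Set.Ioi (0 : ℝ), 0 ≤ g ρ) :
    ∀ ε > 0, ∃ δ > 0, ∀ z : ℝ, 0 < z → z < δ → (∫ ρ in Set.Ioc (0 : ℝ) z, g ρ) < ε := by
  intro ε hε
  have hmono : ∀ z₁ z₂ : ℝ, z₁ ≤ z₂ →
      (∫ ρ in Set.Ioc (0 : ℝ) z₁, g ρ) ≤ ∫ ρ in Set.Ioc (0 : ℝ) z₂, g ρ := by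
    intro z₁ z₂ h
    refine setIntegral_mono_set (hg.mono_set Ioc_subset_Ioi_self) ?_ ?_
    · filter_upwards [ae_restrict_mem measurableSet_Ioc] with x hx
      exact hg0 x hx.1
    · exact HasSubset.Subset.eventuallyLE (Ioc_subset_Ioc_right h)
  have hseq : Tendsto (fun n : ℕ => ∫ ρ in Set.Ioc (0 : ℝ) ((n : ℝ) + 1)⁻¹, g ρ)
      atTop (𝓝 0) := by
    have h := tendsto_setIntegral_of_antitone (f := g) (μ := volume)
      (s := fun n : ℕ => Set.Ioc (0 : ℝ) ((n : ℝ) + 1)⁻¹)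
      (fun _ => measurableSet_Ioc)
      (fun n m hnm => Ioc_subset_Ioc_right (by
        apply inv_anti₀ (by positivity)
        have : (n : ℝ) ≤ m := Nat.cast_le.mpr hnm
        linarith : (((n : ℝ) + 1)⁻¹ ≥ ((m : ℝ) + 1)⁻¹)))
      ⟨0, hg.mono_set Ioc_subset_Ioi_self⟩
    have he : ⋂ n : ℕ, Set.Ioc (0 : ℝ) ((n : ℝ) + 1)⁻¹ = ∅ := by
      ext x
      simp only [mem_iInter, mem_Ioc, mem_empty_iff_false, iff_false, not_forall, not_and]
      by_cases hx : 0 < x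
      · obtain ⟨n, hn⟩ := exists_nat_one_div_lt hx
        exact ⟨n, fun _ => by rw [one_div] at hn; linarith⟩
      · exact ⟨0, fun h => absurd h hx⟩
    rwa [he, setIntegral_empty] at h
  obtain ⟨n, hn⟩ := (hseq.eventually (eventually_lt_nhds hε)).exists
  exact ⟨((n : ℝ) + 1)⁻¹, by positivity, fun z hz hzδ => lt_of_le_of_lt (hmono z _ hzδ.le) hn⟩

/-- Splitting the integral over `Ioi 0` at a point `z > 0`. -/
lemma aux_split_flux (g : ℝ → ℝ) (hg : IntegrableOn g (Set.Ioi 0)) {z : ℝ} (hz : 0 < z) :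
    ∫ ρ in Set.Ioi (0 : ℝ), g ρ
      = (∫ ρ in Set.Ioc (0 : ℝ) z, g ρ) + ∫ ρ in Set.Ioi z, g ρ := by
  rw [← Ioc_union_Ioi_eq_Ioi hz.le,
    setIntegral_union Ioc_disjoint_Ioi_same measurableSet_Ioi
      (hg.mono_set Ioc_subset_Ioi_self) (hg.mono_set (Ioi_subset_Ioi hz.le))]

set_option maxHeartbeats 1000000 in
/-- for a non-increasing nonnegative `U` with `ρ^{d-1}·U(ρ)` integrable on
`(0,∞)`, the weighted integral `∫_z^∞ (1-(z/ρ)^{1/b})^{-α} ρ^{d-1} U(ρ) dρ` tends to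
`∫_0^∞ ρ^{d-1} U(ρ) dρ` as `z → 0⁺`. -/
theorem flux_limit_at_origin (d : ℕ) (hd : 1 ≤ d) (α b : ℝ)
    (hα : α ∈ Set.Ioo (0:ℝ) 1) (hb : 0 < b)
    (U : ℝ → ℝ)
    (hU0 : ∀ ρ, 0 < ρ → 0 ≤ U ρ)
    (hUmono : AntitoneOn U (Set.Ioi 0))
    (hUint : MeasureTheory.IntegrableOn (fun ρ => ρ ^ ((d:ℝ) - 1) * U ρ) (Set.Ioi 0)) :
    Filter.Tendsto
      (fun z : ℝ =>
        ∫ ρ in Set.Ioi z, (1 - (z / ρ) ^ (1 / b)) ^ (-α) * ρ ^ ((d:ℝ) - 1) * U ρ)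
      (nhdsWithin 0 (Set.Ioi 0))
      (nhds (∫ ρ in Set.Ioi (0:ℝ), ρ ^ ((d:ℝ) - 1) * U ρ)) := by
  obtain ⟨hα0, hα1⟩ := hα
  have hs : 0 < 1 / b := by positivity
  have hd1 : (0:ℝ) ≤ (d:ℝ) - 1 := by
    have : (1:ℝ) ≤ (d:ℝ) := by exact_mod_cast hd
    linarith
  have hg0 : ∀ ρ ∈ Set.Ioi (0:ℝ), 0 ≤ ρ ^ ((d:ℝ) - 1) * U ρ := fun ρ hρ =>
    mul_nonneg (Real.rpow_nonneg (le_of_lt hρ) _) (hU0 ρ hρ)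
  set I : ℝ := ∫ ρ in Set.Ioi (0:ℝ), ρ ^ ((d:ℝ) - 1) * U ρ with hIdef
  have hI0 : 0 ≤ I := setIntegral_nonneg measurableSet_Ioi hg0
  -- nonnegativity of tail integrals
  have hT0 : ∀ z : ℝ, 0 ≤ ∫ ρ in Set.Ioc (0:ℝ) z, ρ ^ ((d:ℝ) - 1) * U ρ := fun z =>
    setIntegral_nonneg measurableSet_Ioc (fun ρ hρ => hg0 ρ hρ.1)
  -- constants
  set c : ℝ := min (1 / b) 1 with hcdef
  have hc0 : 0 < c := lt_min hs one_pos
  rw [Metric.tendsto_nhdsWithin_nhds]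
  intro ε hε
  -- choose K large
  have hCt : Tendsto (fun K : ℝ => (1 - K ^ (-(1 / b))) ^ (-α)) atTop (𝓝 1) := by
    have h1 : Tendsto (fun K : ℝ => K ^ (-(1 / b))) atTop (𝓝 0) := tendsto_rpow_neg_atTop hs
    have h2 : ContinuousAt (fun t : ℝ => (1 - t) ^ (-α)) 0 :=
      ContinuousAt.rpow_const (continuous_const.sub continuous_id).continuousAt
        (Or.inl (by norm_num))
    simpa [Function.comp_def] using h2.tendsto.comp h1
  have hev : ∀ᶠ K in atTop, (1 - K ^ (-(1 / b))) ^ (-α) < 1 + ε / (2 * (I + 1)) :=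
    hCt.eventually (eventually_lt_nhds (lt_add_of_pos_right 1 (by positivity)))
  obtain ⟨K, hKC, hK2⟩ := (hev.and (eventually_ge_atTop 2)).exists
  set C : ℝ := (1 - K ^ (-(1 / b))) ^ (-α) with hCdef
  have hK1 : (1:ℝ) < K := lt_of_lt_of_le one_lt_two hK2
  have hK0 : (0:ℝ) < K := by linarith
  have hKs1 : K ^ (-(1 / b)) < 1 := Real.rpow_lt_one_of_one_lt_of_neg hK1 (by linarith)
  have hKs0 : 0 < K ^ (-(1 / b)) := Real.rpow_pos_of_pos hK0 _
  have hbase : 0 < 1 - K ^ (-(1 / b)) := by linarith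
  have hC1 : 1 ≤ C := Real.one_le_rpow_of_pos_of_le_one_of_nonpos hbase (by linarith)
    (by linarith)
  set C₁ : ℝ := c ^ (-α) * K ^ α * K ^ ((d:ℝ) - 1) * (K - 1) ^ (1 - α) / (1 - α) with hC₁def
  have hC₁0 : 0 ≤ C₁ := by
    apply div_nonneg _ (by linarith)
    have h1 : (0:ℝ) ≤ c ^ (-α) := Real.rpow_nonneg hc0.le _
    have h2 : (0:ℝ) ≤ K ^ α := Real.rpow_nonneg hK0.le _
    have h3 : (0:ℝ) ≤ K ^ ((d:ℝ) - 1) := Real.rpow_nonneg hK0.le _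
    have h4 : (0:ℝ) ≤ (K - 1) ^ (1 - α) := Real.rpow_nonneg (by linarith) _
    positivity
  set D : ℝ := C₁ * 2 ^ (d:ℝ) + 1 with hDdef
  have h2d0 : (0:ℝ) ≤ 2 ^ (d:ℝ) := Real.rpow_nonneg (by norm_num) _
  have hD0 : 0 < D := by nlinarith [mul_nonneg hC₁0 h2d0]
  set ε' : ℝ := min (ε / 2) (ε / (2 * D)) with hε'def
  have hε'0 : 0 < ε' := lt_min (by positivity) (by positivity)
  obtain ⟨δ, hδ0, hδ⟩ := aux_Tlimit_flux (fun ρ => ρ ^ ((d:ℝ) - 1) * U ρ) hUint hg0 ε' hε'0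
  refine ⟨δ, hδ0, ?_⟩
  intro z hzmem hzdist
  have hz0 : 0 < z := mem_Ioi.mp hzmem
  have hzδ : z < δ := by
    rw [Real.dist_eq, sub_zero, abs_of_pos hz0] at hzdist; exact hzdist
  have hTz : (∫ ρ in Set.Ioc (0:ℝ) z, ρ ^ ((d:ℝ) - 1) * U ρ) < ε' := hδ z hz0 hzδ
  have hzK : z < K * z := by nlinarith [mul_pos (by linarith : (0:ℝ) < K - 1) hz0]
  have hKz0 : 0 < K * z := by positivity
  have hUz0 : 0 ≤ U z := hU0 z hz0
  -- pointwise facts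
  have hbpos : ∀ ρ : ℝ, z < ρ → 0 < 1 - (z / ρ) ^ (1 / b) := by
    intro ρ hρ
    have hρ0 : 0 < ρ := hz0.trans hρ
    have h1 : z / ρ < 1 := (div_lt_one hρ0).mpr hρ
    have h2 : (0:ℝ) ≤ z / ρ := by positivity
    have := Real.rpow_lt_one h2 h1 hs
    linarith
  have hw1 : ∀ ρ : ℝ, z < ρ → 1 ≤ (1 - (z / ρ) ^ (1 / b)) ^ (-α) := by
    intro ρ hρ
    have h2 : (0:ℝ) ≤ (z / ρ) ^ (1 / b) := Real.rpow_nonneg (div_nonneg hz0.le (hz0.trans hρ).le) _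
    exact Real.one_le_rpow_of_pos_of_le_one_of_nonpos (hbpos ρ hρ) (by linarith)
      (by linarith)
  have hh0 : ∀ ρ : ℝ, z < ρ →
      0 ≤ (1 - (z / ρ) ^ (1 / b)) ^ (-α) * ρ ^ ((d:ℝ) - 1) * U ρ := by
    intro ρ hρ
    have hρ0 : 0 < ρ := hz0.trans hρ
    exact mul_nonneg (mul_nonneg (le_trans zero_le_one (hw1 ρ hρ))
      (Real.rpow_nonneg hρ0.le _)) (hU0 ρ hρ0)
  -- measurability
  have hcont : ContinuousOn (fun ρ : ℝ => (1 - (z / ρ) ^ (1 / b)) ^ (-α)) (Set.Ioi z) := by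
    apply ContinuousOn.rpow_const
    · apply ContinuousOn.sub continuousOn_const
      apply ContinuousOn.rpow_const
      · exact continuousOn_const.div continuousOn_id
          (fun ρ hρ => ne_of_gt (hz0.trans hρ))
      · intro ρ _; right; positivity
    · intro ρ hρ; left; exact ne_of_gt (hbpos ρ hρ)
  have hmeas : ∀ S : Set ℝ, MeasurableSet S → S ⊆ Set.Ioi z →
      AEStronglyMeasurable
        (fun ρ => (1 - (z / ρ) ^ (1 / b)) ^ (-α) * ρ ^ ((d:ℝ) - 1) * U ρ)
        (volume.restrict S) := by
    intro S hSm hSs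
    have h1 : AEStronglyMeasurable (fun ρ : ℝ => (1 - (z / ρ) ^ (1 / b)) ^ (-α))
        (volume.restrict S) := (hcont.mono hSs).aestronglyMeasurable hSm
    have h2 : AEStronglyMeasurable (fun ρ : ℝ => ρ ^ ((d:ℝ) - 1) * U ρ)
        (volume.restrict S) :=
      hUint.1.mono_measure
        (Measure.restrict_mono (hSs.trans (Ioi_subset_Ioi hz0.le)) le_rfl)
    simpa [mul_assoc, Pi.mul_def] using h1.mul h2
  -- the weight bound on the middle region
  set A : ℝ := c ^ (-α) * (K * z) ^ α * ((K * z) ^ ((d:ℝ) - 1) * U z) with hAdef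
  have hbound : ∀ ρ ∈ Set.Ioc z (K * z),
      (1 - (z / ρ) ^ (1 / b)) ^ (-α) * ρ ^ ((d:ℝ) - 1) * U ρ ≤ A * (ρ - z) ^ (-α) := by
    intro ρ hρ
    obtain ⟨hzρ, hρK⟩ := hρ
    have hρ0 : 0 < ρ := hz0.trans hzρ
    have hx0 : (0:ℝ) ≤ z / ρ := by positivity
    have hx1 : z / ρ ≤ 1 := le_of_lt ((div_lt_one hρ0).mpr hzρ)
    have hber := aux_bernoulli_flux hs hx0 hx1
    have h1z : 0 < 1 - z / ρ := by
      have := (div_lt_one hρ0).mpr hzρ; linarith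
    have hcpos : 0 < c * (1 - z / ρ) := by positivity
    have hw_le : (1 - (z / ρ) ^ (1 / b)) ^ (-α) ≤ (c * (1 - z / ρ)) ^ (-α) :=
      Real.rpow_le_rpow_of_nonpos hcpos hber (by linarith)
    have he1 : 1 - z / ρ = (ρ - z) / ρ := by field_simp
    have he2 : (c * ((ρ - z) / ρ)) ^ (-α) = c ^ (-α) * ((ρ - z) / ρ) ^ (-α) :=
      Real.mul_rpow hc0.le (div_nonneg (by linarith) hρ0.le)
    have he3 : ((ρ - z) / ρ) ^ (-α) = (ρ - z) ^ (-α) * ρ ^ α := by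
      rw [Real.div_rpow (by linarith) hρ0.le, Real.rpow_neg hρ0.le, div_eq_mul_inv, inv_inv]
    have hw_le2 : (1 - (z / ρ) ^ (1 / b)) ^ (-α)
        ≤ c ^ (-α) * ((ρ - z) ^ (-α) * ρ ^ α) := by
      calc (1 - (z / ρ) ^ (1 / b)) ^ (-α) ≤ (c * (1 - z / ρ)) ^ (-α) := hw_le
        _ = c ^ (-α) * ((ρ - z) ^ (-α) * ρ ^ α) := by rw [he1, he2, he3]
    have hρα : ρ ^ α ≤ (K * z) ^ α := Real.rpow_le_rpow hρ0.le hρK hα0.le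
    have hρd : ρ ^ ((d:ℝ) - 1) ≤ (K * z) ^ ((d:ℝ) - 1) :=
      Real.rpow_le_rpow hρ0.le hρK hd1
    have hUρ : U ρ ≤ U z := hUmono (mem_Ioi.mpr hz0) (mem_Ioi.mpr hρ0) hzρ.le
    have hc' : (0:ℝ) ≤ c ^ (-α) := Real.rpow_nonneg hc0.le _
    have hr' : (0:ℝ) ≤ (ρ - z) ^ (-α) := Real.rpow_nonneg (by linarith) _
    have hρα0 : (0:ℝ) ≤ ρ ^ α := Real.rpow_nonneg hρ0.le _
    have hρd0 : (0:ℝ) ≤ ρ ^ ((d:ℝ) - 1) := Real.rpow_nonneg hρ0.le _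
    have hUρ0 : 0 ≤ U ρ := hU0 ρ hρ0
    have step1 : (1 - (z / ρ) ^ (1 / b)) ^ (-α) * ρ ^ ((d:ℝ) - 1) * U ρ
        ≤ (c ^ (-α) * ((ρ - z) ^ (-α) * ρ ^ α)) * ρ ^ ((d:ℝ) - 1) * U ρ := by
      apply mul_le_mul_of_nonneg_right _ hUρ0
      exact mul_le_mul_of_nonneg_right hw_le2 hρd0
    have step2 : (c ^ (-α) * ((ρ - z) ^ (-α) * ρ ^ α)) * ρ ^ ((d:ℝ) - 1) * U ρ
        ≤ (c ^ (-α) * ((ρ - z) ^ (-α) * (K * z) ^ α)) * (K * z) ^ ((d:ℝ) - 1) * U z := by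
      apply mul_le_mul
      · apply mul_le_mul
        · apply mul_le_mul_of_nonneg_left _ hc'
          exact mul_le_mul_of_nonneg_left hρα hr'
        · exact hρd
        · exact hρd0
        · positivity
      · exact hUρ
      · exact hUρ0
      · positivity
    calc (1 - (z / ρ) ^ (1 / b)) ^ (-α) * ρ ^ ((d:ℝ) - 1) * U ρ
        ≤ (c ^ (-α) * ((ρ - z) ^ (-α) * (K * z) ^ α)) * (K * z) ^ ((d:ℝ) - 1) * U z :=
          le_trans step1 step2
      _ = A * (ρ - z) ^ (-α) := by rw [hAdef]; ring
  -- integrability of the majorant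
  have hmaj : IntegrableOn (fun ρ : ℝ => (ρ - z) ^ (-α)) (Set.Ioc z (K * z)) := by
    have h1 : IntervalIntegrable (fun x : ℝ => x ^ (-α)) volume (z - z) (K * z - z) :=
      intervalIntegral.intervalIntegrable_rpow' (by linarith)
    have h2 := h1.comp_sub_right z
    have e1 : z - z + z = z := by ring
    have e2 : K * z - z + z = K * z := by ring
    rw [e1, e2] at h2
    exact (intervalIntegrable_iff_integrableOn_Ioc_of_le hzK.le).mp h2
  have hmajval : ∫ ρ in Set.Ioc z (K * z), (ρ - z) ^ (-α)
      = (K * z - z) ^ (1 - α) / (1 - α) := by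
    rw [← intervalIntegral.integral_of_le hzK.le,
      intervalIntegral.integral_comp_sub_right (fun x => x ^ (-α)) z,
      integral_rpow (Or.inl (by linarith)), sub_self,
      Real.zero_rpow (by intro h; linarith : -α + 1 ≠ 0)]
    ring_nf
  -- integrability of the integrand on the two regions
  have hint1 : IntegrableOn
      (fun ρ => (1 - (z / ρ) ^ (1 / b)) ^ (-α) * ρ ^ ((d:ℝ) - 1) * U ρ)
      (Set.Ioc z (K * z)) := by
    apply Integrable.mono' (hmaj.const_mul A) (hmeas _ measurableSet_Ioc Ioc_subset_Ioi_self)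
    filter_upwards [ae_restrict_mem measurableSet_Ioc] with ρ hρ
    rw [Real.norm_eq_abs, abs_of_nonneg (hh0 ρ hρ.1)]
    exact hbound ρ hρ
  have hwC : ∀ ρ : ℝ, K * z < ρ → (1 - (z / ρ) ^ (1 / b)) ^ (-α) ≤ C := by
    intro ρ hρ
    have hρ0 : 0 < ρ := hKz0.trans hρ
    have h1 : z / ρ ≤ K⁻¹ := by
      rw [div_le_iff₀ hρ0, inv_mul_eq_div, le_div_iff₀ hK0]
      linarith
    have h2 : (z / ρ) ^ (1 / b) ≤ K ^ (-(1 / b)) := by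
      have := Real.rpow_le_rpow (by positivity) h1 hs.le
      rwa [Real.inv_rpow hK0.le, ← Real.rpow_neg hK0.le] at this
    exact Real.rpow_le_rpow_of_nonpos hbase (by linarith) (by linarith)
  have hint2 : IntegrableOn
      (fun ρ => (1 - (z / ρ) ^ (1 / b)) ^ (-α) * ρ ^ ((d:ℝ) - 1) * U ρ)
      (Set.Ioi (K * z)) := by
    apply Integrable.mono' ((hUint.mono_set (Ioi_subset_Ioi hKz0.le)).const_mul C)
      (hmeas _ measurableSet_Ioi (Ioi_subset_Ioi hzK.le))
    filter_upwards [ae_restrict_mem measurableSet_Ioi] with ρ hρ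
    have hρm : z < ρ := hzK.trans hρ
    have hρ0 : 0 < ρ := hz0.trans hρm
    rw [Real.norm_eq_abs, abs_of_nonneg (hh0 ρ hρm), mul_assoc]
    exact mul_le_mul_of_nonneg_right (hwC ρ hρ) (hg0 ρ hρ0)
  have hintIoi : IntegrableOn
      (fun ρ => (1 - (z / ρ) ^ (1 / b)) ^ (-α) * ρ ^ ((d:ℝ) - 1) * U ρ)
      (Set.Ioi z) := by
    rw [← Ioc_union_Ioi_eq_Ioi hzK.le]
    exact hint1.union hint2
  -- splitting the integral
  have hFsplit : (∫ ρ in Set.Ioi z, (1 - (z / ρ) ^ (1 / b)) ^ (-α) * ρ ^ ((d:ℝ) - 1) * U ρ)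
      = (∫ ρ in Set.Ioc z (K * z),
          (1 - (z / ρ) ^ (1 / b)) ^ (-α) * ρ ^ ((d:ℝ) - 1) * U ρ)
        + ∫ ρ in Set.Ioi (K * z),
            (1 - (z / ρ) ^ (1 / b)) ^ (-α) * ρ ^ ((d:ℝ) - 1) * U ρ := by
    rw [← Ioc_union_Ioi_eq_Ioi hzK.le,
      setIntegral_union Ioc_disjoint_Ioi_same measurableSet_Ioi hint1 hint2]
  -- bound on the middle region
  have hB1 : (∫ ρ in Set.Ioc z (K * z),
      (1 - (z / ρ) ^ (1 / b)) ^ (-α) * ρ ^ ((d:ℝ) - 1) * U ρ)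
      ≤ A * ((K * z - z) ^ (1 - α) / (1 - α)) := by
    calc (∫ ρ in Set.Ioc z (K * z),
        (1 - (z / ρ) ^ (1 / b)) ^ (-α) * ρ ^ ((d:ℝ) - 1) * U ρ)
        ≤ ∫ ρ in Set.Ioc z (K * z), A * (ρ - z) ^ (-α) :=
          setIntegral_mono_on hint1 (hmaj.const_mul A) measurableSet_Ioc hbound
      _ = A * ∫ ρ in Set.Ioc z (K * z), (ρ - z) ^ (-α) := integral_const_mul A _
      _ = A * ((K * z - z) ^ (1 - α) / (1 - α)) := by rw [hmajval]
  have hAV : A * ((K * z - z) ^ (1 - α) / (1 - α)) = C₁ * z ^ (d:ℝ) * U z := by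
    have e1 : K * z - z = (K - 1) * z := by ring
    rw [hAdef, hC₁def, e1, Real.mul_rpow hK0.le hz0.le,
      Real.mul_rpow (by linarith : (0:ℝ) ≤ K - 1) hz0.le,
      Real.mul_rpow hK0.le hz0.le,
      show (d:ℝ) = α + ((d:ℝ) - 1) + (1 - α) by ring,
      Real.rpow_add hz0, Real.rpow_add hz0]
    ring
  -- bound on the outer region
  have hB2 : (∫ ρ in Set.Ioi (K * z),
      (1 - (z / ρ) ^ (1 / b)) ^ (-α) * ρ ^ ((d:ℝ) - 1) * U ρ) ≤ C * I := by
    calc (∫ ρ in Set.Ioi (K * z),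
        (1 - (z / ρ) ^ (1 / b)) ^ (-α) * ρ ^ ((d:ℝ) - 1) * U ρ)
        ≤ ∫ ρ in Set.Ioi (K * z), C * (ρ ^ ((d:ℝ) - 1) * U ρ) := by
          apply setIntegral_mono_on hint2
            ((hUint.mono_set (Ioi_subset_Ioi hKz0.le)).const_mul C) measurableSet_Ioi
          intro ρ hρ
          have hρ0 : 0 < ρ := hKz0.trans hρ
          rw [mul_assoc]
          exact mul_le_mul_of_nonneg_right (hwC ρ hρ) (hg0 ρ hρ0)
      _ = C * ∫ ρ in Set.Ioi (K * z), ρ ^ ((d:ℝ) - 1) * U ρ := integral_const_mul C _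
      _ ≤ C * I := by
          apply mul_le_mul_of_nonneg_left _ (le_trans zero_le_one hC1)
          rw [hIdef]
          refine setIntegral_mono_set hUint ?_
            (HasSubset.Subset.eventuallyLE (Ioi_subset_Ioi hKz0.le))
          filter_upwards [ae_restrict_mem measurableSet_Ioi] with x hx
          exact hg0 x hx
  -- lower bound
  have hlow : (∫ ρ in Set.Ioi z, ρ ^ ((d:ℝ) - 1) * U ρ)
      ≤ ∫ ρ in Set.Ioi z, (1 - (z / ρ) ^ (1 / b)) ^ (-α) * ρ ^ ((d:ℝ) - 1) * U ρ := by
    apply setIntegral_mono_on (hUint.mono_set (Ioi_subset_Ioi hz0.le)) hintIoi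
      measurableSet_Ioi
    intro ρ hρ
    have hρ0 : 0 < ρ := hz0.trans hρ
    calc ρ ^ ((d:ℝ) - 1) * U ρ = 1 * (ρ ^ ((d:ℝ) - 1) * U ρ) := by ring
      _ ≤ (1 - (z / ρ) ^ (1 / b)) ^ (-α) * (ρ ^ ((d:ℝ) - 1) * U ρ) :=
          mul_le_mul_of_nonneg_right (hw1 ρ hρ) (hg0 ρ hρ0)
      _ = (1 - (z / ρ) ^ (1 / b)) ^ (-α) * ρ ^ ((d:ℝ) - 1) * U ρ := by ring
  have hIsplit : I = (∫ ρ in Set.Ioc (0:ℝ) z, ρ ^ ((d:ℝ) - 1) * U ρ)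
      + ∫ ρ in Set.Ioi z, ρ ^ ((d:ℝ) - 1) * U ρ :=
    aux_split_flux _ hUint hz0
  -- z^d U z ≤ 2^d T z
  have hzd : z ^ (d:ℝ) * U z ≤ 2 ^ (d:ℝ)
      * ∫ ρ in Set.Ioc (0:ℝ) z, ρ ^ ((d:ℝ) - 1) * U ρ := by
    have hz2 : 0 < z / 2 := by positivity
    have hsub : (∫ ρ in Set.Ioc (z / 2) z, ρ ^ ((d:ℝ) - 1) * U ρ)
        ≤ ∫ ρ in Set.Ioc (0:ℝ) z, ρ ^ ((d:ℝ) - 1) * U ρ := by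
      refine setIntegral_mono_set (hUint.mono_set Ioc_subset_Ioi_self) ?_
        (HasSubset.Subset.eventuallyLE (Ioc_subset_Ioc_left hz2.le))
      filter_upwards [ae_restrict_mem measurableSet_Ioc] with x hx
      exact hg0 x hx.1
    have hconst : ∀ ρ ∈ Set.Ioc (z / 2) z,
        (z / 2) ^ ((d:ℝ) - 1) * U z ≤ ρ ^ ((d:ℝ) - 1) * U ρ := by
      intro ρ hρ
      have hρ0 : 0 < ρ := hz2.trans hρ.1
      exact mul_le_mul (Real.rpow_le_rpow hz2.le hρ.1.le hd1)
        (hUmono (mem_Ioi.mpr hρ0) (mem_Ioi.mpr hz0) hρ.2) hUz0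
        (Real.rpow_nonneg hρ0.le _)
    have hci : (∫ _ρ in Set.Ioc (z / 2) z, (z / 2) ^ ((d:ℝ) - 1) * U z)
        ≤ ∫ ρ in Set.Ioc (z / 2) z, ρ ^ ((d:ℝ) - 1) * U ρ := by
      apply setIntegral_mono_on
        ((integrableOn_const_iff).mpr (Or.inr measure_Ioc_lt_top))
        (hUint.mono_set (fun x hx => lt_trans hz2 hx.1))
        measurableSet_Ioc hconst
    have hcival : (∫ _ρ in Set.Ioc (z / 2) z, (z / 2) ^ ((d:ℝ) - 1) * U z)
        = (z / 2) ^ ((d:ℝ) - 1) * U z * (z / 2) := by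
      rw [setIntegral_const, Real.volume_real_Ioc_of_le (by linarith),
        smul_eq_mul]
      ring
    have hpow : (z / 2) ^ ((d:ℝ) - 1) * U z * (z / 2) = (z / 2) ^ (d:ℝ) * U z := by
      rw [show (d:ℝ) = ((d:ℝ) - 1) + 1 by ring, Real.rpow_add hz2, Real.rpow_one]
      ring
    have hzpow : z ^ (d:ℝ) = 2 ^ (d:ℝ) * (z / 2) ^ (d:ℝ) := by
      rw [← Real.mul_rpow (by norm_num) hz2.le, show (2:ℝ) * (z / 2) = z by ring]
    have hfin : (z / 2) ^ (d:ℝ) * U z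
        ≤ ∫ ρ in Set.Ioc (0:ℝ) z, ρ ^ ((d:ℝ) - 1) * U ρ := by
      rw [← hpow, ← hcival]
      exact le_trans hci hsub
    calc z ^ (d:ℝ) * U z = 2 ^ (d:ℝ) * ((z / 2) ^ (d:ℝ) * U z) := by
          rw [hzpow]; ring
      _ ≤ 2 ^ (d:ℝ) * ∫ ρ in Set.Ioc (0:ℝ) z, ρ ^ ((d:ℝ) - 1) * U ρ :=
          mul_le_mul_of_nonneg_left hfin h2d0
  -- final assembly
  set Tz : ℝ := ∫ ρ in Set.Ioc (0:ℝ) z, ρ ^ ((d:ℝ) - 1) * U ρ with hTzdef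
  have hTz0 : 0 ≤ Tz := hT0 z
  rw [Real.dist_eq, abs_sub_lt_iff]
  have hε'1 : ε' ≤ ε / 2 := min_le_left _ _
  have hε'2 : ε' ≤ ε / (2 * D) := min_le_right _ _
  constructor
  · -- upper bound
    have hup : (∫ ρ in Set.Ioi z, (1 - (z / ρ) ^ (1 / b)) ^ (-α) * ρ ^ ((d:ℝ) - 1) * U ρ)
        ≤ C₁ * z ^ (d:ℝ) * U z + C * I := by
      rw [hFsplit]
      have := le_trans hB1 (le_of_eq hAV)
      linarith [hB2]
    have h1 : C₁ * z ^ (d:ℝ) * U z ≤ C₁ * (2 ^ (d:ℝ) * Tz) := by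
      rw [mul_assoc]
      exact mul_le_mul_of_nonneg_left hzd hC₁0
    have h2 : C₁ * (2 ^ (d:ℝ) * Tz) < ε / 2 := by
      have hTε : Tz < ε / (2 * D) := lt_of_lt_of_le hTz hε'2
      have hCD : C₁ * 2 ^ (d:ℝ) < D := by rw [hDdef]; linarith
      have h3 : C₁ * 2 ^ (d:ℝ) * Tz ≤ C₁ * 2 ^ (d:ℝ) * (ε / (2 * D)) := by
        apply mul_le_mul_of_nonneg_left hTε.le (by positivity)
      have h4 : C₁ * 2 ^ (d:ℝ) * (ε / (2 * D)) < ε / 2 := by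
        have h4a : C₁ * 2 ^ (d:ℝ) * (ε / (2 * D)) < D * (ε / (2 * D)) :=
          mul_lt_mul_of_pos_right hCD (by positivity)
        have h4b : D * (ε / (2 * D)) = ε / 2 := by
          have hDne : D ≠ 0 := hD0.ne'
          field_simp
        linarith
      calc C₁ * (2 ^ (d:ℝ) * Tz) = C₁ * 2 ^ (d:ℝ) * Tz := by ring
        _ ≤ C₁ * 2 ^ (d:ℝ) * (ε / (2 * D)) := h3
        _ < ε / 2 := h4
    have hCI : C * I - I < ε / 2 := by
      have h5 : C - 1 < ε / (2 * (I + 1)) := by linarith [hKC]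
      have h6 : (C - 1) * I ≤ (ε / (2 * (I + 1))) * I := by
        apply mul_le_mul_of_nonneg_right h5.le hI0
      have h7 : (ε / (2 * (I + 1))) * I < ε / 2 := by
        have h7a : (ε / (2 * (I + 1))) * I < (ε / (2 * (I + 1))) * (I + 1) :=
          mul_lt_mul_of_pos_left (by linarith) (by positivity)
        have h7b : (ε / (2 * (I + 1))) * (I + 1) = ε / 2 := by
          have hIne : I + 1 ≠ 0 := by positivity
          field_simp
        linarith
      have h8 : (C - 1) * I = C * I - I := by ring
      linarith
    linarith [hup, h1, h2, hCI]
  · -- lower bound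
    have hlow2 : I - Tz ≤ ∫ ρ in Set.Ioi z,
        (1 - (z / ρ) ^ (1 / b)) ^ (-α) * ρ ^ ((d:ℝ) - 1) * U ρ := by
      have : I - Tz = ∫ ρ in Set.Ioi z, ρ ^ ((d:ℝ) - 1) * U ρ := by
        rw [hIsplit]; ring
      rw [this]
      exact hlow
    have : Tz < ε := lt_of_lt_of_le hTz (le_trans hε'1 (by linarith))
    linarith
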